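/- Assume either α ∈ (0,1), or α = 1 and GᵀΣ_ν⁻¹G is positive definite. Let C_∞ be the unique positive definite solution of C_∞⁻¹ = GᵀΣ_ν⁻¹G + (α²C_∞ + Σ_ω)⁻¹. Then for every symmetric positive semidefinite initial matrix C_0, the covariance sequence of the Kalman iteration converges to C_∞ exponentially fast: each C_n (n ≥ 1) is positive definite and there exist K > 0 and r ∈ (0,1) such that ‖C_n⁻¹ − C_∞⁻¹‖ ≤ K rⁿ for all n ≥ 1. -/

import Mathlib

open Matrix
open scoped Matrix.Norms.L2Operator

set_option linter.unusedSectionVars false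

section KalmanAux

variable {ι : Type*} [Fintype ι] [DecidableEq ι]

lemma kalman_psd_smul {c : ℝ} {X : Matrix ι ι ℝ} (hc : 0 ≤ c) (hX : X.PosSemidef) :
    (c • X).PosSemidef := by
  refine Matrix.PosSemidef.of_dotProduct_mulVec_nonneg ?_ ?_
  · show _ = _
    rw [conjTranspose_smul, hX.1.eq]; simp
  · intro x
    rw [smul_mulVec, dotProduct_smul]
    exact mul_nonneg hc (hX.dotProduct_mulVec_nonneg x)

lemma kalman_pd_smul {c : ℝ} {X : Matrix ι ι ℝ} (hc : 0 < c) (hX : X.PosDef) :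
    (c • X).PosDef := by
  refine Matrix.PosDef.of_dotProduct_mulVec_pos ?_ ?_
  · show _ = _
    rw [conjTranspose_smul, hX.1.eq]; simp
  · intro x hx
    rw [smul_mulVec, dotProduct_smul]
    exact mul_pos hc (hX.dotProduct_mulVec_pos hx)

lemma kalman_det_isUnit {X : Matrix ι ι ℝ} (hX : X.PosDef) : IsUnit X.det :=
  isUnit_iff_ne_zero.2 hX.det_pos.ne'

lemma kalman_smul_inv {c : ℝ} {X : Matrix ι ι ℝ} (hc : c ≠ 0) (hX : X.PosDef) :
    (c • X)⁻¹ = c⁻¹ • X⁻¹ := by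
  apply Matrix.inv_eq_right_inv
  rw [Matrix.smul_mul, Matrix.mul_smul, smul_smul,
    Matrix.mul_nonsing_inv _ (kalman_det_isUnit hX), mul_inv_cancel₀ hc, one_smul]

/-- Loewner antitonicity of inverse, proved via the Legendre/completion-of-squares trick. -/
lemma kalman_inv_antitone {A B : Matrix ι ι ℝ} (hA : A.PosDef) (hB : B.PosDef)
    (hAB : (B - A).PosSemidef) : (A⁻¹ - B⁻¹).PosSemidef := by
  have hAt : Aᵀ = A := by
    have := hA.1.eq; rwa [conjTranspose_eq_transpose_of_trivial] at this
  refine Matrix.PosSemidef.of_dotProduct_mulVec_nonneg ?_ ?_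
  · exact (hA.inv.1.sub hB.inv.1)
  · intro x
    rw [star_trivial]
    set y : ι → ℝ := B⁻¹ *ᵥ x with hy
    set z : ι → ℝ := A⁻¹ *ᵥ x with hz
    have hAz : A *ᵥ z = x := by
      rw [hz, mulVec_mulVec, Matrix.mul_nonsing_inv _ (kalman_det_isUnit hA), one_mulVec]
    have hBy : B *ᵥ y = x := by
      rw [hy, mulVec_mulVec, Matrix.mul_nonsing_inv _ (kalman_det_isUnit hB), one_mulVec]
    have key : 0 ≤ (y - z) ⬝ᵥ A *ᵥ (y - z) := by simpa using hA.posSemidef.dotProduct_mulVec_nonneg (y - z)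
    have key2 : 0 ≤ y ⬝ᵥ (B - A) *ᵥ y := by simpa using hAB.dotProduct_mulVec_nonneg y
    have e1 : z ⬝ᵥ A *ᵥ y = x ⬝ᵥ y := by
      rw [dotProduct_mulVec, ← mulVec_transpose, hAt, hAz]
    have e2 : y ⬝ᵥ A *ᵥ z = y ⬝ᵥ x := by rw [hAz]
    have e3 : z ⬝ᵥ A *ᵥ z = z ⬝ᵥ x := by rw [hAz]
    have e4 : y ⬝ᵥ B *ᵥ y = y ⬝ᵥ x := by rw [hBy]
    have c1 : x ⬝ᵥ y = y ⬝ᵥ x := dotProduct_comm _ _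
    have c2 : x ⬝ᵥ z = z ⬝ᵥ x := dotProduct_comm _ _
    simp only [mulVec_sub, dotProduct_sub, sub_dotProduct, sub_mulVec] at key key2
    rw [e1, e2, e3] at key
    rw [e4] at key2
    show 0 ≤ x ⬝ᵥ (A⁻¹ - B⁻¹) *ᵥ x
    rw [sub_mulVec, dotProduct_sub]
    show 0 ≤ x ⬝ᵥ z - x ⬝ᵥ y
    linarith

lemma kalman_dot_eq_normsq (x : ι → ℝ) :
    x ⬝ᵥ x = ‖(WithLp.equiv 2 (ι → ℝ)).symm x‖ ^ 2 := by
  have h := real_inner_self_eq_norm_sq ((WithLp.equiv 2 (ι → ℝ)).symm x)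
  rw [← h]
  change x ⬝ᵥ x = x ⬝ᵥ star x
  rw [star_trivial]

lemma kalman_dot_mulVec_le {A : Matrix ι ι ℝ} (x : ι → ℝ) :
    x ⬝ᵥ A *ᵥ x ≤ ‖A‖ * (x ⬝ᵥ x) := by
  have h1 : x ⬝ᵥ A *ᵥ x
      = inner ℝ ((WithLp.equiv 2 (ι → ℝ)).symm x) ((WithLp.equiv 2 (ι → ℝ)).symm (A *ᵥ x)) := by
    change x ⬝ᵥ A *ᵥ x = (A *ᵥ x) ⬝ᵥ star x
    rw [star_trivial, dotProduct_comm]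
  have h2 := real_inner_le_norm ((WithLp.equiv 2 (ι → ℝ)).symm x)
    ((WithLp.equiv 2 (ι → ℝ)).symm (A *ᵥ x))
  have h3 : ‖(EuclideanSpace.equiv ι ℝ).symm (A *ᵥ ((WithLp.equiv 2 (ι → ℝ)) ((WithLp.equiv 2 (ι → ℝ)).symm x)))‖
      ≤ ‖A‖ * ‖(WithLp.equiv 2 (ι → ℝ)).symm x‖ := Matrix.l2_opNorm_mulVec A _
  simp only [Equiv.apply_symm_apply] at h3
  have h4 : ‖(WithLp.equiv 2 (ι → ℝ)).symm (A *ᵥ x)‖ ≤ ‖A‖ * ‖(WithLp.equiv 2 (ι → ℝ)).symm x‖ := h3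
  rw [h1, kalman_dot_eq_normsq]
  set nx := ‖(WithLp.equiv 2 (ι → ℝ)).symm x‖
  have hnx : 0 ≤ nx := norm_nonneg _
  calc inner ℝ ((WithLp.equiv 2 (ι → ℝ)).symm x) ((WithLp.equiv 2 (ι → ℝ)).symm (A *ᵥ x))
      ≤ nx * ‖(WithLp.equiv 2 (ι → ℝ)).symm (A *ᵥ x)‖ := h2
    _ ≤ nx * (‖A‖ * nx) := by
        exact mul_le_mul_of_nonneg_left h4 hnx
    _ = ‖A‖ * nx ^ 2 := by ring

/-- A Hermitian matrix is bounded above by its operator norm times the identity. -/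
lemma kalman_le_norm_smul_one {A : Matrix ι ι ℝ} (hA : A.IsHermitian) :
    (‖A‖ • (1 : Matrix ι ι ℝ) - A).PosSemidef := by
  refine Matrix.PosSemidef.of_dotProduct_mulVec_nonneg ?_ ?_
  · show _ = _
    rw [conjTranspose_sub, conjTranspose_smul, hA.eq]
    simp
  · intro x
    rw [star_trivial, sub_mulVec, dotProduct_sub, smul_mulVec, one_mulVec,
      dotProduct_smul]
    have := kalman_dot_mulVec_le (A := A) x
    simp only [smul_eq_mul]
    linarith

lemma kalman_norm_le {A : Matrix ι ι ℝ} (hA : A.IsHermitian) {b : ℝ} (hb : 0 ≤ b)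
    (h1 : (b • (1 : Matrix ι ι ℝ) - A).PosSemidef) (h2 : (A + b • (1 : Matrix ι ι ℝ)).PosSemidef) :
    ‖A‖ ≤ b := by
  have hAt : Aᵀ = A := by
    have := hA.eq; rwa [conjTranspose_eq_transpose_of_trivial] at this
  have habs : ∀ x : ι → ℝ, |x ⬝ᵥ A *ᵥ x| ≤ b * (x ⬝ᵥ x) := by
    intro x
    have k1 := h1.dotProduct_mulVec_nonneg x
    have k2 := h2.dotProduct_mulVec_nonneg x
    rw [star_trivial, sub_mulVec, dotProduct_sub, smul_mulVec, one_mulVec,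
      dotProduct_smul] at k1
    rw [star_trivial, add_mulVec, dotProduct_add, smul_mulVec, one_mulVec,
      dotProduct_smul] at k2
    simp only [smul_eq_mul] at k1 k2
    rw [abs_le]; constructor <;> linarith
  have pol : ∀ x z : ι → ℝ, 4 * ((A *ᵥ x) ⬝ᵥ z) ≤ 2*b*(x ⬝ᵥ x) + 2*b*(z ⬝ᵥ z) := by
    intro x z
    have p1 := (abs_le.1 (habs (x + z))).2
    have p2 := (abs_le.1 (habs (x - z))).1
    have e1 : x ⬝ᵥ A *ᵥ z = (A *ᵥ x) ⬝ᵥ z := by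
      rw [dotProduct_mulVec, ← mulVec_transpose, hAt]
    have e2 : z ⬝ᵥ A *ᵥ x = (A *ᵥ x) ⬝ᵥ z := dotProduct_comm _ _
    have c1 : x ⬝ᵥ z = z ⬝ᵥ x := dotProduct_comm _ _
    simp only [mulVec_add, mulVec_sub, dotProduct_add, dotProduct_sub, add_dotProduct,
      sub_dotProduct] at p1 p2
    rw [e1, e2] at p1 p2
    linarith
  rw [Matrix.l2_opNorm_def]
  apply ContinuousLinearMap.opNorm_le_bound _ hb
  intro v
  have hrfl : ((Matrix.toEuclideanLin.trans LinearMap.toContinuousLinearMap) A) v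
      = (WithLp.equiv 2 (ι → ℝ)).symm (A *ᵥ (WithLp.equiv 2 (ι → ℝ) v)) := rfl
  rw [hrfl]
  set x := WithLp.equiv 2 (ι → ℝ) v with hx
  set u := A *ᵥ x with hu
  have hxv : (WithLp.equiv 2 (ι → ℝ)).symm x = v := by rw [hx]; exact Equiv.symm_apply_apply _ _
  have hnv : x ⬝ᵥ x = ‖v‖ ^ 2 := by rw [kalman_dot_eq_normsq, hxv]
  have hnu : u ⬝ᵥ u = ‖(WithLp.equiv 2 (ι → ℝ)).symm u‖ ^ 2 := kalman_dot_eq_normsq u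
  set nu := ‖(WithLp.equiv 2 (ι → ℝ)).symm u‖ with hnu'
  by_cases h0 : nu = 0
  · rw [h0]; positivity
  · have hnu0 : 0 < nu := lt_of_le_of_ne (norm_nonneg _) (Ne.symm h0)
    have hv0 : 0 < ‖v‖ := by
      rcases eq_or_lt_of_le (norm_nonneg v) with h | h
      · exfalso
        have : v = 0 := by rwa [eq_comm, norm_eq_zero] at h
        apply h0
        rw [hnu', hu, hx, this]
        simp
      · exact h
    have hp := pol x ((‖v‖ / nu) • u)
    have d1 : u ⬝ᵥ ((‖v‖ / nu) • u) = ‖v‖ * nu := by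
      rw [dotProduct_smul, smul_eq_mul, hnu]
      field_simp
    have d2 : ((‖v‖ / nu) • u) ⬝ᵥ ((‖v‖ / nu) • u) = ‖v‖ ^ 2 := by
      rw [smul_dotProduct, dotProduct_smul, smul_eq_mul, smul_eq_mul, hnu]
      field_simp
    rw [d1, d2, hnv] at hp
    nlinarith

lemma kalman_pd_ne_zero [Nonempty ι] {A : Matrix ι ι ℝ} (hA : A.PosDef) : A ≠ 0 := by
  intro h
  obtain ⟨i⟩ := ‹Nonempty ι›
  have hx : (Pi.single i 1 : ι → ℝ) ≠ 0 := by
    intro hc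
    have := congrFun hc i
    simp at this
  have := hA.dotProduct_mulVec_pos hx
  rw [h] at this
  simp at this

lemma kalman_pd_norm_pos [Nonempty ι] {A : Matrix ι ι ℝ} (hA : A.PosDef) : 0 < ‖A‖ :=
  norm_pos_iff.2 (kalman_pd_ne_zero hA)

lemma kalman_pd_smul_one {c : ℝ} (hc : 0 < c) : (c • (1 : Matrix ι ι ℝ)).PosDef :=
  kalman_pd_smul hc Matrix.PosDef.one

lemma kalman_exists_lower [Nonempty ι] {A : Matrix ι ι ℝ} (hA : A.PosDef) :
    ∃ c : ℝ, 0 < c ∧ (A - c • (1 : Matrix ι ι ℝ)).PosSemidef := by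
  set N := ‖A⁻¹‖ with hNdef
  have hN : 0 < N := kalman_pd_norm_pos hA.inv
  have h1 : (N • (1 : Matrix ι ι ℝ) - A⁻¹).PosSemidef := kalman_le_norm_smul_one hA.inv.1
  have h2 := kalman_inv_antitone hA.inv (kalman_pd_smul_one hN) h1
  rw [Matrix.nonsing_inv_nonsing_inv _ (kalman_det_isUnit hA),
    kalman_smul_inv hN.ne' Matrix.PosDef.one, inv_one] at h2
  exact ⟨N⁻¹, inv_pos.2 hN, h2⟩

lemma kalman_amgm {m s t β : ℝ} (hm : 0 < m) (hs : 0 < s) (ht : 0 ≤ t)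
    (hβ : β = m / (m + s)) :
    m + s ≤ Real.exp (β * t) * s + Real.exp ((β - 1) * t) * m := by
  have hms : 0 < m + s := by linarith
  have key : (1 : ℝ) ≤ s/(m+s) * Real.exp (β*t) + m/(m+s) * Real.exp ((β-1)*t) := by
    have h := Real.geom_mean_le_arith_mean2_weighted
      (div_nonneg hs.le hms.le) (div_nonneg hm.le hms.le)
      (Real.exp_pos (β*t)).le (Real.exp_pos ((β-1)*t)).le
      (by field_simp; ring)
    calc (1:ℝ) = Real.exp (β*t) ^ (s/(m+s)) * Real.exp ((β-1)*t) ^ (m/(m+s)) := by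
          rw [← Real.exp_mul, ← Real.exp_mul, ← Real.exp_add, ← Real.exp_zero]
          congr 1
          rw [hβ]
          field_simp
          rw [Real.exp_zero]; ring
      _ ≤ _ := h
  have expand : (m+s) * (s/(m+s) * Real.exp (β*t) + m/(m+s) * Real.exp ((β-1)*t))
      = Real.exp (β*t) * s + Real.exp ((β-1)*t) * m := by
    field_simp
  have := mul_le_mul_of_nonneg_left key hms.le
  rw [expand] at this
  linarith

end KalmanAux

set_option maxHeartbeats 2000000

/-- Assume either `α ∈ (0,1)`, or `α = 1` and `Gᵀ Sν⁻¹ G` is positive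
definite. Let `Cinf` be the (unique) positive definite solution of
`Cinf⁻¹ = Gᵀ Sν⁻¹ G + (α² Cinf + Sω)⁻¹`. Then for every symmetric positive
semidefinite initial matrix `C 0`, the covariance sequence of the Kalman iteration
`C (n+1) ⁻¹ = Gᵀ Sν⁻¹ G + (α² C n + Sω)⁻¹` converges to `Cinf` exponentially fast:
each `C n` (`n ≥ 1`) is positive definite and there exist `K > 0` and `r ∈ (0,1)`
such that `‖(C n)⁻¹ − Cinf⁻¹‖ ≤ K rⁿ` for all `n ≥ 1` (operator norm induced by the
Euclidean norm). -/
theorem kalman_covariance_exponential_convergence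
    {Nθ Ny : ℕ} (hNθ : 0 < Nθ) (hNy : 0 < Ny)
    (G : Matrix (Fin Ny) (Fin Nθ) ℝ)
    (Sν : Matrix (Fin Ny) (Fin Ny) ℝ) (hSν : Sν.PosDef)
    (Sω : Matrix (Fin Nθ) (Fin Nθ) ℝ) (hSω : Sω.PosDef)
    (α : ℝ) (hα : 0 < α)
    (hcase : α < 1 ∨ (α = 1 ∧ (Gᵀ * Sν⁻¹ * G).PosDef))
    (Cinf : Matrix (Fin Nθ) (Fin Nθ) ℝ) (hCinf : Cinf.PosDef)
    (hfix : Cinf⁻¹ = Gᵀ * Sν⁻¹ * G + (α ^ 2 • Cinf + Sω)⁻¹)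
    (C : ℕ → Matrix (Fin Nθ) (Fin Nθ) ℝ) (hC0 : (C 0).PosSemidef)
    (hCrec : ∀ n, C (n + 1) = (Gᵀ * Sν⁻¹ * G + (α ^ 2 • C n + Sω)⁻¹)⁻¹) :
    (∀ n, 1 ≤ n → (C n).PosDef) ∧
      ∃ K > (0 : ℝ), ∃ r ∈ Set.Ioo (0 : ℝ) 1,
        ∀ n, 1 ≤ n → ‖(C n)⁻¹ - Cinf⁻¹‖ ≤ K * r ^ n := by
  have hNe : Nonempty (Fin Nθ) := ⟨⟨0, hNθ⟩⟩
  set B := Gᵀ * Sν⁻¹ * G with hBdef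
  have hB : B.PosSemidef := by
    have h := (hSν.inv.posSemidef).conjTranspose_mul_mul_same G
    rwa [conjTranspose_eq_transpose_of_trivial] at h
  set E := α ^ 2 • Cinf + Sω with hEdef
  have hα2 : (0:ℝ) < α ^ 2 := by positivity
  have hDpd : ∀ X : Matrix (Fin Nθ) (Fin Nθ) ℝ, X.PosSemidef → (α ^ 2 • X + Sω).PosDef :=
    fun X hX => Matrix.PosDef.posSemidef_add (kalman_psd_smul hα2.le hX) hSω
  have hE : E.PosDef := hDpd Cinf hCinf.posSemidef
  have hCstep : ∀ n, (C n).PosSemidef → (C (n+1)).PosDef := by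
    intro n hn
    rw [hCrec n]
    exact (Matrix.PosDef.posSemidef_add hB (hDpd _ hn).inv).inv
  have hCpsd : ∀ n, (C n).PosSemidef := by
    intro n
    induction n with
    | zero => exact hC0
    | succ k ih => exact (hCstep k ih).posSemidef
  have hCpd : ∀ n, (C (n+1)).PosDef := fun n => hCstep n (hCpsd n)
  -- constants
  obtain ⟨s, hs, hsSω⟩ := kalman_exists_lower hSω
  obtain ⟨c₀, hc₀, hc₀C⟩ := kalman_exists_lower hCinf
  obtain ⟨d₀, hd₀, hd₀C⟩ := kalman_exists_lower (hCpd 0)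
  have hMc : 0 < ‖Cinf‖ := kalman_pd_norm_pos hCinf
  have hN1 : (‖C 1‖ • (1 : Matrix (Fin Nθ) (Fin Nθ) ℝ) - C 1).PosSemidef :=
    kalman_le_norm_smul_one (hCpd 0).1
  have hNinf : (‖Cinf‖ • (1 : Matrix (Fin Nθ) (Fin Nθ) ℝ) - Cinf).PosSemidef :=
    kalman_le_norm_smul_one hCinf.1
  obtain ⟨a, hadef⟩ : ∃ a : ℝ, a = ‖C 1‖ / c₀ := ⟨_, rfl⟩
  obtain ⟨b₀, hb₀def⟩ : ∃ b₀ : ℝ, b₀ = d₀ / ‖Cinf‖ := ⟨_, rfl⟩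
  have hb₀ : 0 < b₀ := by rw [hb₀def]; exact div_pos hd₀ hMc
  obtain ⟨t₁, ht₁def⟩ : ∃ t₁ : ℝ, t₁ = Real.log (max (max a (1/b₀)) (Real.exp 1)) := ⟨_, rfl⟩
  have hmaxpos : 0 < max (max a (1/b₀)) (Real.exp 1) :=
    lt_of_lt_of_le (Real.exp_pos 1) (le_max_right _ _)
  have het₁ : Real.exp t₁ = max (max a (1/b₀)) (Real.exp 1) := by
    rw [ht₁def]; exact Real.exp_log hmaxpos
  have ht₁1 : 1 ≤ t₁ := by
    have : Real.exp 1 ≤ Real.exp t₁ := by rw [het₁]; exact le_max_right _ _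
    exact Real.exp_le_exp.1 this
  have ht₁0 : 0 ≤ t₁ := by linarith
  have ha_le : a ≤ Real.exp t₁ := by
    rw [het₁]; exact le_trans (le_max_left _ _) (le_max_left _ _)
  have hb₀_le : Real.exp (-t₁) ≤ b₀ := by
    have h1b : 1/b₀ ≤ Real.exp t₁ := by
      rw [het₁]; exact le_trans (le_max_right _ _) (le_max_left _ _)
    rw [Real.exp_neg]
    rw [div_le_iff₀ hb₀] at h1b
    rw [inv_le_iff_one_le_mul₀ (Real.exp_pos _)]
    linarith [mul_comm b₀ (Real.exp t₁)]
  -- base sandwich at time t₁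
  have hub1 : (Real.exp t₁ • Cinf - C 1).PosSemidef := by
    have p1 : (a • Cinf - C 1).PosSemidef := by
      have q1 : (a • (Cinf - c₀ • (1 : Matrix (Fin Nθ) (Fin Nθ) ℝ))).PosSemidef := by
        rw [hadef]
        exact kalman_psd_smul (div_nonneg (norm_nonneg (C 1)) hc₀.le) hc₀C
      have hacz : a * c₀ = ‖C 1‖ := by rw [hadef]; field_simp
      have hid : a • Cinf - C 1 = a • (Cinf - c₀ • (1 : Matrix (Fin Nθ) (Fin Nθ) ℝ))
          + (‖C 1‖ • (1 : Matrix (Fin Nθ) (Fin Nθ) ℝ) - C 1) := by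
        match_scalars <;> (try rw [hadef]) <;> field_simp [hc₀.ne'] <;> ring
      rw [hid]; exact q1.add hN1
    have hid : Real.exp t₁ • Cinf - C 1 = (Real.exp t₁ - a) • Cinf + (a • Cinf - C 1) := by
      match_scalars <;> ring
    rw [hid]
    exact (kalman_psd_smul (by linarith) hCinf.posSemidef).add p1
  have hlb1 : (C 1 - Real.exp (-t₁) • Cinf).PosSemidef := by
    have p2 : (C 1 - b₀ • Cinf).PosSemidef := by
      have q2 := kalman_psd_smul hb₀.le hNinf
      have hbz : b₀ * ‖Cinf‖ = d₀ := by rw [hb₀def]; field_simp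
      have hid : C 1 - b₀ • Cinf = (C 1 - d₀ • (1 : Matrix (Fin Nθ) (Fin Nθ) ℝ))
          + b₀ • (‖Cinf‖ • (1 : Matrix (Fin Nθ) (Fin Nθ) ℝ) - Cinf) := by
        match_scalars <;> (try rw [hb₀def]) <;> field_simp [hMc.ne'] <;> ring
      rw [hid]; exact hd₀C.add q2
    have hid : C 1 - Real.exp (-t₁) • Cinf = (C 1 - b₀ • Cinf) + (b₀ - Real.exp (-t₁)) • Cinf := by
      match_scalars <;> ring
    rw [hid]
    exact p2.add (kalman_psd_smul (by linarith) hCinf.posSemidef)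
  have hexpt₁ : 1 ≤ Real.exp t₁ := Real.one_le_exp ht₁0
  -- uniform bound constants
  obtain ⟨M, hMdef⟩ : ∃ M : ℝ, M = Real.exp t₁ * ‖Cinf‖ := ⟨_, rfl⟩
  have hM : 0 < M := by rw [hMdef]; positivity
  obtain ⟨m, hmdef⟩ : ∃ m : ℝ, m = α ^ 2 * M := ⟨_, rfl⟩
  have hm : 0 < m := by rw [hmdef]; positivity
  obtain ⟨β, hβdef⟩ : ∃ β : ℝ, β = m / (m + s) := ⟨_, rfl⟩
  have hβ0 : 0 < β := by rw [hβdef]; positivity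
  have hβ1 : β < 1 := by rw [hβdef]; rw [div_lt_one (by linarith)]; linarith
  have hMCinf : (M • (1 : Matrix (Fin Nθ) (Fin Nθ) ℝ) - Cinf).PosSemidef := by
    have hid : M • (1 : Matrix (Fin Nθ) (Fin Nθ) ℝ) - Cinf
        = ((Real.exp t₁ - 1) * ‖Cinf‖) • (1 : Matrix (Fin Nθ) (Fin Nθ) ℝ)
          + (‖Cinf‖ • (1 : Matrix (Fin Nθ) (Fin Nθ) ℝ) - Cinf) := by
      rw [hMdef]; match_scalars <;> ring
    rw [hid]
    exact (kalman_psd_smul (mul_nonneg (by linarith) hMc.le) Matrix.PosSemidef.one).add hNinf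
  -- the contraction step
  have step : ∀ (n : ℕ) (t : ℝ), 0 ≤ t → t ≤ t₁ →
      (Real.exp t • Cinf - C (n+1)).PosSemidef →
      (C (n+1) - Real.exp (-t) • Cinf).PosSemidef →
      (Real.exp (β*t) • Cinf - C (n+2)).PosSemidef ∧
        (C (n+2) - Real.exp (-(β*t)) • Cinf).PosSemidef := by
    intro n t ht0 ht1 hup hlo
    set Dn := α ^ 2 • C (n+1) + Sω with hDndef
    have hDnpd : Dn.PosDef := hDpd _ (hCpsd (n+1))
    have hq : Real.exp ((β-1)*t) * Real.exp t = Real.exp (β*t) := by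
      rw [← Real.exp_add]; ring_nf
    have hq1 : Real.exp ((β-1)*t) ≤ 1 := by
      rw [Real.exp_le_one_iff]
      have : β - 1 ≤ 0 := by linarith
      exact mul_nonpos_of_nonpos_of_nonneg this ht0
    have hq0 : 0 < Real.exp ((β-1)*t) := Real.exp_pos _
    have hp1 : 1 ≤ Real.exp (β*t) := Real.one_le_exp (by positivity)
    have hu1 : Real.exp (-(β*t)) ≤ 1 := by
      rw [Real.exp_le_one_iff]
      simp only [neg_nonpos]
      positivity
    have hv_le_u : Real.exp (-t) ≤ Real.exp (-(β*t)) := by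
      apply Real.exp_le_exp.2
      have : β * t ≤ t := by nlinarith
      linarith
    have hamgm := kalman_amgm hm hs ht0 hβdef
    -- uniform bound on C (n+1)
    have hMCn : (M • (1 : Matrix (Fin Nθ) (Fin Nθ) ℝ) - C (n+1)).PosSemidef := by
      have h1 : (0:ℝ) ≤ Real.exp t₁ - Real.exp t := by
        have := Real.exp_le_exp.2 ht1; linarith
      have hid : M • (1 : Matrix (Fin Nθ) (Fin Nθ) ℝ) - C (n+1)
          = (Real.exp t • Cinf - C (n+1)) + (Real.exp t₁ - Real.exp t) • Cinf
            + Real.exp t₁ • (‖Cinf‖ • (1 : Matrix (Fin Nθ) (Fin Nθ) ℝ) - Cinf) := by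
        rw [hMdef]; match_scalars <;> ring
      rw [hid]
      exact (hup.add (kalman_psd_smul h1 hCinf.posSemidef)).add
        (kalman_psd_smul (Real.exp_pos t₁).le hNinf)
    -- upper: Dn ⪯ exp (βt) • E
    have hupE : (Real.exp (β*t) • E - Dn).PosSemidef := by
      have hsc : (0:ℝ) ≤ (Real.exp (β*t) - 1) * s - (1 - Real.exp ((β-1)*t)) * m := by
        nlinarith
      have hid : Real.exp (β*t) • E - Dn
          = (Real.exp ((β-1)*t) * α^2) • (Real.exp t • Cinf - C (n+1))
            + ((1 - Real.exp ((β-1)*t)) * α^2) • (M • (1 : Matrix (Fin Nθ) (Fin Nθ) ℝ) - C (n+1))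
            + (Real.exp (β*t) - 1) • (Sω - s • (1 : Matrix (Fin Nθ) (Fin Nθ) ℝ))
            + ((Real.exp (β*t) - 1) * s - (1 - Real.exp ((β-1)*t)) * m) •
                (1 : Matrix (Fin Nθ) (Fin Nθ) ℝ) := by
        rw [hEdef, hDndef, hmdef]
        match_scalars <;>
          first
            | ring1
            | linear_combination (α^2) * hq
            | linear_combination -(α^2) * hq
      rw [hid]
      refine (((kalman_psd_smul ?_ hup).add (kalman_psd_smul ?_ hMCn)).add
        (kalman_psd_smul ?_ hsSω)).add (kalman_psd_smul hsc Matrix.PosSemidef.one)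
      · positivity
      · nlinarith
      · linarith
    -- lower: exp (−βt) • E ⪯ Dn
    have hloE : (Dn - Real.exp (-(β*t)) • E).PosSemidef := by
      have hmulp : Real.exp (-(β*t)) * Real.exp (β*t) = 1 := by
        rw [← Real.exp_add]; simp
      have hmulq : Real.exp (-(β*t)) * Real.exp ((β-1)*t) = Real.exp (-t) := by
        rw [← Real.exp_add]; ring_nf
      have hsc : (0:ℝ) ≤ (1 - Real.exp (-(β*t))) * s
          - (Real.exp (-(β*t)) - Real.exp (-t)) * m := by
        have h5 := mul_le_mul_of_nonneg_left hamgm (Real.exp_pos (-(β*t))).le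
        nlinarith
      have hid : Dn - Real.exp (-(β*t)) • E
          = α^2 • (C (n+1) - Real.exp (-t) • Cinf)
            + (1 - Real.exp (-(β*t))) • (Sω - s • (1 : Matrix (Fin Nθ) (Fin Nθ) ℝ))
            + ((Real.exp (-(β*t)) - Real.exp (-t)) * α^2) •
                (M • (1 : Matrix (Fin Nθ) (Fin Nθ) ℝ) - Cinf)
            + ((1 - Real.exp (-(β*t))) * s - (Real.exp (-(β*t)) - Real.exp (-t)) * m) •
                (1 : Matrix (Fin Nθ) (Fin Nθ) ℝ) := by
        rw [hEdef, hDndef, hmdef]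
        match_scalars <;> ring
      rw [hid]
      refine (((kalman_psd_smul ?_ hlo).add (kalman_psd_smul ?_ hsSω)).add
        (kalman_psd_smul ?_ hMCinf)).add (kalman_psd_smul hsc Matrix.PosSemidef.one)
      · positivity
      · linarith
      · nlinarith
    -- invert the two comparisons
    have hpE : (Real.exp (β*t) • E).PosDef := kalman_pd_smul (Real.exp_pos _) hE
    have huE : (Real.exp (-(β*t)) • E).PosDef := kalman_pd_smul (Real.exp_pos _) hE
    have h7 := kalman_inv_antitone hDnpd hpE hupE
    rw [kalman_smul_inv (Real.exp_pos _).ne' hE, ← Real.exp_neg] at h7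
    have h8 := kalman_inv_antitone huE hDnpd hloE
    rw [kalman_smul_inv (Real.exp_pos _).ne' hE, Real.exp_neg, inv_inv] at h8
    -- identify C (n+2)⁻¹
    have hXpd : (B + Dn⁻¹).PosDef := Matrix.PosDef.posSemidef_add hB hDnpd.inv
    have hC2 : C (n+2) = (B + Dn⁻¹)⁻¹ := by rw [hCrec (n+1), hDndef]
    have hCinvEq : (C (n+2))⁻¹ = B + Dn⁻¹ := by
      rw [hC2, Matrix.nonsing_inv_nonsing_inv _ (kalman_det_isUnit hXpd)]
    have hC2pd : (C (n+2)).PosDef := hCpd (n+1)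
    -- sandwich the inverse of C (n+2)
    have h9 : ((C (n+2))⁻¹ - Real.exp (-(β*t)) • Cinf⁻¹).PosSemidef := by
      have hid : (C (n+2))⁻¹ - Real.exp (-(β*t)) • Cinf⁻¹
          = (Dn⁻¹ - Real.exp (-(β*t)) • E⁻¹) + (1 - Real.exp (-(β*t))) • B := by
        rw [hCinvEq, hfix]
        match_scalars <;> ring
      rw [hid]
      exact h7.add (kalman_psd_smul (by linarith) hB)
    have h10 : (Real.exp (β*t) • Cinf⁻¹ - (C (n+2))⁻¹).PosSemidef := by
      have hid : Real.exp (β*t) • Cinf⁻¹ - (C (n+2))⁻¹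
          = (Real.exp (β*t) • E⁻¹ - Dn⁻¹) + (Real.exp (β*t) - 1) • B := by
        rw [hCinvEq, hfix]
        match_scalars <;> ring
      rw [hid]
      exact h8.add (kalman_psd_smul (by linarith) hB)
    -- invert once more
    have hCinfinvpd : Cinf⁻¹.PosDef := hCinf.inv
    have hC2invpd : ((C (n+2))⁻¹).PosDef := hC2pd.inv
    have h11 := kalman_inv_antitone (kalman_pd_smul (Real.exp_pos (-(β*t))) hCinfinvpd)
      hC2invpd h9
    rw [kalman_smul_inv (Real.exp_pos _).ne' hCinfinvpd, Real.exp_neg, inv_inv,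
      Matrix.nonsing_inv_nonsing_inv _ (kalman_det_isUnit hCinf),
      Matrix.nonsing_inv_nonsing_inv _ (kalman_det_isUnit hC2pd)] at h11
    have h12 := kalman_inv_antitone hC2invpd
      (kalman_pd_smul (Real.exp_pos (β*t)) hCinfinvpd) h10
    rw [kalman_smul_inv (Real.exp_pos _).ne' hCinfinvpd, ← Real.exp_neg,
      Matrix.nonsing_inv_nonsing_inv _ (kalman_det_isUnit hCinf),
      Matrix.nonsing_inv_nonsing_inv _ (kalman_det_isUnit hC2pd)] at h12
    exact ⟨h11, h12⟩
  -- iterate the contraction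
  have inv : ∀ k : ℕ, (Real.exp (β^k * t₁) • Cinf - C (k+1)).PosSemidef ∧
      (C (k+1) - Real.exp (-(β^k * t₁)) • Cinf).PosSemidef := by
    intro k
    induction k with
    | zero => simpa using ⟨hub1, hlb1⟩
    | succ j ih =>
      have h0 : 0 ≤ β^j * t₁ := by positivity
      have h1 : β^j * t₁ ≤ t₁ := by
        have hle : β^j ≤ 1 := pow_le_one₀ hβ0.le hβ1.le
        nlinarith
      have hstep := step j (β^j * t₁) h0 h1 ih.1 ih.2
      have harg : β * (β^j * t₁) = β^(j+1) * t₁ := by ring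
      rw [harg] at hstep
      exact hstep
  constructor
  · intro n hn
    obtain ⟨k, rfl⟩ : ∃ k, n = k + 1 := ⟨n - 1, by omega⟩
    exact hCpd k
  · have hNi : 0 < ‖Cinf⁻¹‖ := kalman_pd_norm_pos hCinf.inv
    refine ⟨t₁ * Real.exp t₁ * ‖Cinf⁻¹‖ / β, by positivity, β, ⟨hβ0, hβ1⟩, ?_⟩
    intro n hn
    obtain ⟨k, rfl⟩ : ∃ k, n = k + 1 := ⟨n - 1, by omega⟩
    obtain ⟨hup, hlo⟩ := inv k
    obtain ⟨t, htdef⟩ : ∃ t : ℝ, t = β^k * t₁ := ⟨_, rfl⟩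
    rw [← htdef] at hup hlo
    have ht0 : 0 ≤ t := by rw [htdef]; positivity
    have ht1 : t ≤ t₁ := by
      rw [htdef]
      have hle : β^k ≤ 1 := pow_le_one₀ hβ0.le hβ1.le
      nlinarith
    have hCn1 := hCpd k
    have S1 := kalman_inv_antitone hCn1 (kalman_pd_smul (Real.exp_pos t) hCinf) hup
    rw [kalman_smul_inv (Real.exp_pos t).ne' hCinf, ← Real.exp_neg] at S1
    have S2 := kalman_inv_antitone (kalman_pd_smul (Real.exp_pos (-t)) hCinf) hCn1 hlo
    rw [kalman_smul_inv (Real.exp_pos (-t)).ne' hCinf, Real.exp_neg, inv_inv] at S2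
    have hNinv : (‖Cinf⁻¹‖ • (1 : Matrix (Fin Nθ) (Fin Nθ) ℝ) - Cinf⁻¹).PosSemidef :=
      kalman_le_norm_smul_one hCinf.inv.1
    have het : 1 ≤ Real.exp t := Real.one_le_exp ht0
    have hvt : Real.exp (-t) ≤ 1 := by rw [Real.exp_le_one_iff]; linarith
    have hv0 : 0 < Real.exp (-t) := Real.exp_pos _
    have hXh : ((C (k+1))⁻¹ - Cinf⁻¹).IsHermitian := (hCn1.inv.1).sub (hCinf.inv.1)
    have hb0 : (0:ℝ) ≤ (Real.exp t - 1) * ‖Cinf⁻¹‖ := by nlinarith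
    have h1 : (((Real.exp t - 1) * ‖Cinf⁻¹‖) • (1 : Matrix (Fin Nθ) (Fin Nθ) ℝ)
        - ((C (k+1))⁻¹ - Cinf⁻¹)).PosSemidef := by
      have hid : ((Real.exp t - 1) * ‖Cinf⁻¹‖) • (1 : Matrix (Fin Nθ) (Fin Nθ) ℝ)
            - ((C (k+1))⁻¹ - Cinf⁻¹)
          = (Real.exp t • Cinf⁻¹ - (C (k+1))⁻¹)
            + (Real.exp t - 1) • (‖Cinf⁻¹‖ • (1 : Matrix (Fin Nθ) (Fin Nθ) ℝ) - Cinf⁻¹) := by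
        match_scalars <;> ring1
      rw [hid]
      exact S2.add (kalman_psd_smul (by linarith) hNinv)
    have h2 : ((((C (k+1))⁻¹ - Cinf⁻¹))
        + ((Real.exp t - 1) * ‖Cinf⁻¹‖) • (1 : Matrix (Fin Nθ) (Fin Nθ) ℝ)).PosSemidef := by
      have hkey : (0:ℝ) ≤ (Real.exp t - 1) * ‖Cinf⁻¹‖ - (1 - Real.exp (-t)) * ‖Cinf⁻¹‖ := by
        have e1 := Real.add_one_le_exp t
        have e2 := Real.add_one_le_exp (-t)
        nlinarith
      have hid : ((C (k+1))⁻¹ - Cinf⁻¹)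
            + ((Real.exp t - 1) * ‖Cinf⁻¹‖) • (1 : Matrix (Fin Nθ) (Fin Nθ) ℝ)
          = ((C (k+1))⁻¹ - Real.exp (-t) • Cinf⁻¹)
            + (1 - Real.exp (-t)) • (‖Cinf⁻¹‖ • (1 : Matrix (Fin Nθ) (Fin Nθ) ℝ) - Cinf⁻¹)
            + ((Real.exp t - 1) * ‖Cinf⁻¹‖ - (1 - Real.exp (-t)) * ‖Cinf⁻¹‖) •
                (1 : Matrix (Fin Nθ) (Fin Nθ) ℝ) := by
        match_scalars <;> ring1
      rw [hid]
      exact (S1.add (kalman_psd_smul (by linarith) hNinv)).add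
        (kalman_psd_smul hkey Matrix.PosSemidef.one)
    have hnorm := kalman_norm_le hXh hb0 h1 h2
    have hbound : (Real.exp t - 1) * ‖Cinf⁻¹‖
        ≤ t₁ * Real.exp t₁ * ‖Cinf⁻¹‖ / β * β ^ (k+1) := by
      have e2 := Real.add_one_le_exp (-t)
      have epos := Real.exp_pos t
      have emul : Real.exp (-t) * Real.exp t = 1 := by rw [← Real.exp_add]; simp
      have ht' : Real.exp t - 1 ≤ t * Real.exp t := by nlinarith
      have hexp_le : Real.exp t ≤ Real.exp t₁ := Real.exp_le_exp.2 ht1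
      have hβk : t₁ * Real.exp t₁ * ‖Cinf⁻¹‖ / β * β ^ (k+1)
          = (β^k * t₁) * Real.exp t₁ * ‖Cinf⁻¹‖ := by
        field_simp
        ring
      rw [hβk, ← htdef]
      have f1 : (Real.exp t - 1) * ‖Cinf⁻¹‖ ≤ t * Real.exp t * ‖Cinf⁻¹‖ :=
        mul_le_mul_of_nonneg_right ht' hNi.le
      have f2 : t * Real.exp t * ‖Cinf⁻¹‖ ≤ t * Real.exp t₁ * ‖Cinf⁻¹‖ :=
        mul_le_mul_of_nonneg_right (mul_le_mul_of_nonneg_left hexp_le ht0) hNi.le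
      linarith
    calc ‖(C (k+1))⁻¹ - Cinf⁻¹‖ ≤ (Real.exp t - 1) * ‖Cinf⁻¹‖ := hnorm
      _ ≤ _ := hbound
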